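/- For every nonempty bounded set F ⊆ ℝ^n with dim_{qA}(F) > 0, the phase-transition parameter satisfies ρ(F) ≥ 1 − \overline{dim}_B(F)/dim_{qA}(F). -/

import Mathlib

open Set Metric
open scoped ENNReal

noncomputable section

/-- Covering number: the smallest number of sets of diameter at most `r` needed to
cover `F` (`∞` if no finite such cover exists). -/
def coverN {X : Type*} [PseudoMetricSpace X] (F : Set X) (r : ℝ) : ℝ≥0∞ :=
  sInf {m : ℝ≥0∞ | ∃ 𝒰 : Finset (Set X), (𝒰.card : ℝ≥0∞) = m ∧
    (∀ U ∈ 𝒰, EMetric.diam U ≤ ENNReal.ofReal r) ∧ F ⊆ ⋃ U ∈ 𝒰, U}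

/-- Regularized Assouad spectrum `dim_{A,reg}^θ(F)`. -/
def dimAreg {X : Type*} [PseudoMetricSpace X] (θ : ℝ) (F : Set X) : ℝ :=
  sInf {α : ℝ | 0 < α ∧ ∃ C : ℝ, 0 < C ∧ ∀ x ∈ F, ∀ r R : ℝ,
    0 < r → r ≤ R ^ (1/θ) → R ^ (1/θ) < R → R < 1 →
    coverN (closedBall x R ∩ F) r ≤ ENNReal.ofReal (C * (R/r) ^ α)}

/-- (Unregularized) Assouad spectrum `dim_A^θ(F)`. -/
def dimAspec {X : Type*} [PseudoMetricSpace X] (θ : ℝ) (F : Set X) : ℝ :=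
  sInf {α : ℝ | 0 < α ∧ ∃ C : ℝ, 0 < C ∧ ∀ x ∈ F, ∀ R : ℝ, 0 < R → R < 1 →
    coverN (closedBall x R ∩ F) (R ^ (1/θ)) ≤ ENNReal.ofReal (C * (R / R ^ (1/θ)) ^ α)}

/-- Upper box-counting dimension of a (bounded) set. -/
def dimBupper {X : Type*} [PseudoMetricSpace X] (F : Set X) : ℝ :=
  sInf {α : ℝ | 0 < α ∧ ∃ C : ℝ, 0 < C ∧ ∀ r : ℝ, 0 < r → r ≤ diam F →
    coverN F r ≤ ENNReal.ofReal (C * r ^ (-α))}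

/-- Assouad dimension. -/
def dimA {X : Type*} [PseudoMetricSpace X] (F : Set X) : ℝ :=
  sInf {α : ℝ | 0 < α ∧ ∃ C : ℝ, 0 < C ∧ ∀ x ∈ F, ∀ r R : ℝ, 0 < r → r ≤ R →
    coverN (closedBall x R ∩ F) r ≤ ENNReal.ofReal (C * (R/r) ^ α)}

/-- Quasi-Assouad dimension: `sup_{0<θ<1} dim_{A,reg}^θ(F)`. -/
def dimqA {X : Type*} [PseudoMetricSpace X] (F : Set X) : ℝ :=
  sSup ((fun θ => dimAreg θ F) '' Ioo (0:ℝ) 1)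

open Classical in
/-- Phase-transition parameter `ρ(F)`. -/
def rhoPT {X : Type*} [PseudoMetricSpace X] (F : Set X) : ℝ :=
  if ∃ θ ∈ Ioo (0:ℝ) 1, dimAreg θ F = dimqA F
  then sInf {θ | θ ∈ Ioo (0:ℝ) 1 ∧ dimAreg θ F = dimqA F}
  else 1

/-- The axes-parallel cube `Q(x,R) = ∏ [xᵢ - R, xᵢ + R]`. -/
def cubeQ {n : ℕ} (x : EuclideanSpace ℝ (Fin n)) (R : ℝ) : Set (EuclideanSpace ℝ (Fin n)) :=
  {y | ∀ i, x i - R ≤ y i ∧ y i ≤ x i + R}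

/-- The generation-`m` dyadic subcube of `Q(x,R)` with index `k`. -/
def dyadicCube {n : ℕ} (x : EuclideanSpace ℝ (Fin n)) (R : ℝ) (m : ℕ)
    (k : Fin n → Fin (2 ^ m)) : Set (EuclideanSpace ℝ (Fin n)) :=
  {y | ∀ i, x i - R + (k i : ℝ) * (2 * R / 2 ^ m) ≤ y i ∧
        y i ≤ x i - R + ((k i : ℝ) + 1) * (2 * R / 2 ^ m)}

/-- `N_d(B(x,R) ∩ F, m)`: the number of generation-`m` dyadic subcubes of `Q(x,R)`
that intersect `B(x,R) ∩ F`. -/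
def Nd {n : ℕ} (x : EuclideanSpace ℝ (Fin n)) (R : ℝ)
    (F : Set (EuclideanSpace ℝ (Fin n))) (m : ℕ) : ℕ :=
  Nat.card {k : Fin n → Fin (2 ^ m) // (dyadicCube x R m k ∩ (closedBall x R ∩ F)).Nonempty}

/-- `f` is `η`-quasisymmetric on the set `S`. -/
def QSOn {X Y : Type*} [PseudoMetricSpace X] [PseudoMetricSpace Y]
    (η : ℝ → ℝ) (f : X → Y) (S : Set X) : Prop :=
  ∀ x ∈ S, ∀ y ∈ S, ∀ z ∈ S, x ≠ z →
    dist (f x) (f y) ≤ η (dist x y / dist x z) * dist (f x) (f z)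

/-- Distance between two sets. -/
def setDist {X : Type*} [PseudoMetricSpace X] (A B : Set X) : ℝ :=
  sInf {d : ℝ | ∃ a ∈ A, ∃ b ∈ B, d = dist a b}

end


namespace Stmt12Aux

variable {X : Type*} [PseudoMetricSpace X]

lemma coverN_le_card (F : Set X) (r : ℝ) (𝒰 : Finset (Set X))
    (hd : ∀ U ∈ 𝒰, EMetric.diam U ≤ ENNReal.ofReal r)
    (hc : F ⊆ ⋃ U ∈ 𝒰, U) : coverN F r ≤ 𝒰.card :=
  sInf_le ⟨𝒰, rfl, hd, hc⟩

lemma coverN_mono {A B : Set X} (h : A ⊆ B) (r : ℝ) : coverN A r ≤ coverN B r := by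
  apply sInf_le_sInf
  rintro m ⟨𝒰, h1, h2, h3⟩
  exact ⟨𝒰, h1, h2, h.trans h3⟩

lemma coverN_le_one {F : Set X} {r : ℝ} (h : EMetric.diam F ≤ ENNReal.ofReal r) :
    coverN F r ≤ 1 := by
  have h2 := coverN_le_card F r {F} ?_ ?_
  · simpa using h2
  · intro U hU
    rw [Finset.mem_singleton] at hU
    subst hU; exact h
  · intro y hy; simp [hy]

lemma exists_box_bound {n : ℕ} (F : Set (EuclideanSpace ℝ (Fin n)))
    (hF : Bornology.IsBounded F) :
    ∃ γ C : ℝ, 0 < γ ∧ 0 < C ∧ ∀ r : ℝ, 0 < r → r ≤ diam F →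
      coverN F r ≤ ENNReal.ofReal (C * r ^ (-γ)) := by
  classical
  obtain ⟨R₀, hR₀⟩ := hF.subset_closedBall 0
  set D : ℝ := max R₀ 1 with hD
  have hD1 : (1:ℝ) ≤ D := le_max_right _ _
  have hD0 : (0:ℝ) < D := lt_of_lt_of_le one_pos hD1
  have hFD : F ⊆ closedBall 0 D := hR₀.trans (closedBall_subset_closedBall (le_max_left _ _))
  have hdiam : diam F ≤ 2 * D := by
    calc diam F ≤ diam (closedBall (0:EuclideanSpace ℝ (Fin n)) D) :=
          diam_mono hFD isBounded_closedBall
      _ ≤ 2 * D := diam_closedBall hD0.le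
  set A : ℝ := 2 * D * (n + 1) + 8 * D with hA
  have hA0 : 0 < A := by positivity
  refine ⟨(n:ℝ) + 1, A ^ n * (2 * D), by positivity, by positivity, ?_⟩
  intro r hr hrd
  have hr2D : r ≤ 2 * D := hrd.trans hdiam
  set s : ℝ := r / (n + 1) with hs
  have hs0 : 0 < s := by positivity
  set M : ℕ := ⌈D / s⌉₊ with hM
  set K : Finset (Fin n → ℤ) := Fintype.piFinset (fun _ => Finset.Icc (-(M:ℤ) - 1) (M:ℤ)) with hK
  set cell : (Fin n → ℤ) → Set (EuclideanSpace ℝ (Fin n)) :=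
    fun k => {y | ∀ i, (k i : ℝ) * s ≤ y i ∧ y i < ((k i : ℝ) + 1) * s} ∩ F with hcell
  set 𝒰 : Finset (Set (EuclideanSpace ℝ (Fin n))) := K.image cell with h𝒰
  have hdiamcell : ∀ k, EMetric.diam (cell k) ≤ ENNReal.ofReal r := by
    intro k
    apply EMetric.diam_le
    intro y hy z hz
    rw [edist_dist]
    apply ENNReal.ofReal_le_ofReal
    have hcoord : ∀ i, dist (y i) (z i) ≤ s := by
      intro i
      obtain ⟨hy1, _⟩ := hy
      obtain ⟨hz1, _⟩ := hz
      have h1 := hy1 i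
      have h2 := hz1 i
      rw [Real.dist_eq, abs_sub_le_iff]
      constructor <;> nlinarith [h1.1, h1.2, h2.1, h2.2]
    calc dist y z = Real.sqrt (∑ i, dist (y i) (z i) ^ 2) := EuclideanSpace.dist_eq y z
      _ ≤ Real.sqrt (∑ _i : Fin n, s ^ 2) := by
          apply Real.sqrt_le_sqrt
          apply Finset.sum_le_sum
          intro i _
          exact pow_le_pow_left₀ dist_nonneg (hcoord i) 2
      _ = Real.sqrt ((n:ℝ) * s ^ 2) := by rw [Finset.sum_const]; simp [nsmul_eq_mul]
      _ ≤ Real.sqrt (((n:ℝ)+1)^2 * s ^ 2) := by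
          apply Real.sqrt_le_sqrt
          have hn : (n:ℝ) ≤ ((n:ℝ)+1)^2 := by nlinarith [Nat.cast_nonneg (α := ℝ) n]
          nlinarith [sq_nonneg s]
      _ = ((n:ℝ)+1) * s := by
          rw [← mul_pow, Real.sqrt_sq (by positivity)]
      _ = r := by rw [hs]; field_simp
  have hcover : F ⊆ ⋃ U ∈ 𝒰, U := by
    intro y hy
    set k : Fin n → ℤ := fun i => ⌊y i / s⌋ with hk
    have hyD : ∀ i, |y i| ≤ D := by
      intro i
      have h1 : ‖y‖ ≤ D := by
        have h2 := hFD hy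
        rwa [mem_closedBall, dist_zero_right] at h2
      refine le_trans ?_ h1
      rw [EuclideanSpace.norm_eq, ← Real.sqrt_sq_eq_abs]
      apply Real.sqrt_le_sqrt
      have h3 := Finset.single_le_sum (f := fun j => ‖y j‖ ^ 2)
        (fun j _ => sq_nonneg _) (Finset.mem_univ i)
      simpa [Real.norm_eq_abs, sq_abs] using h3
    have hDsM : D / s ≤ (M:ℝ) := Nat.le_ceil _
    have hys : ∀ i, -(D/s) ≤ y i / s ∧ y i / s ≤ D / s := by
      intro i
      obtain ⟨hl, hu⟩ := abs_le.mp (hyD i)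
      constructor
      · rw [← neg_div]
        exact (div_le_div_iff_of_pos_right hs0).mpr hl
      · exact (div_le_div_iff_of_pos_right hs0).mpr hu
    have hkK : k ∈ K := by
      rw [hK, Fintype.mem_piFinset]
      intro i
      rw [Finset.mem_Icc]
      refine ⟨Int.le_floor.mpr ?_, ?_⟩
      · push_cast
        have := (hys i).1
        linarith
      · have h4 : (⌊y i / s⌋ : ℝ) ≤ (M:ℝ) := le_trans (Int.floor_le _) (le_trans (hys i).2 hDsM)
        exact_mod_cast h4
    have hycell : y ∈ cell k := by
      refine ⟨fun i => ⟨?_, ?_⟩, hy⟩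
      · have h5 := mul_le_mul_of_nonneg_right (Int.floor_le (y i / s)) hs0.le
        rwa [div_mul_cancel₀ _ hs0.ne'] at h5
      · have h6 := mul_lt_mul_of_pos_right (Int.lt_floor_add_one (y i / s)) hs0
        rwa [div_mul_cancel₀ _ hs0.ne'] at h6
    exact mem_iUnion₂.mpr ⟨cell k, Finset.mem_image_of_mem cell hkK, hycell⟩
  have hKcard : K.card = (2*M+2)^n := by
    rw [hK, Fintype.card_piFinset]
    have h7 : (Finset.Icc (-(M:ℤ) - 1) (M:ℤ)).card = 2*M+2 := by
      rw [Int.card_Icc]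
      omega
    simp [h7]
  have hMr : (M:ℝ) ≤ D/s + 1 := (Nat.ceil_lt_add_one (by positivity)).le
  have hDs : D / s = D * ((n:ℝ)+1) / r := by rw [hs]; field_simp
  have h2 : (2*(M:ℝ)+2) ≤ A / r := by
    rw [le_div_iff₀ hr]
    have e : (D/s) * r = D*((n:ℝ)+1) := by rw [hDs]; field_simp
    have h1' := mul_le_mul_of_nonneg_right hMr hr.le
    rw [hA]
    push_cast
    nlinarith [hr2D]
  have h3 : ((2*M+2 : ℕ):ℝ)^n ≤ (A/r)^n := by
    apply pow_le_pow_left₀ (by positivity)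
    push_cast
    exact h2
  have h4 : (A/r)^n ≤ (A^n * (2*D)) * r^(-((n:ℝ)+1)) := by
    rw [Real.rpow_neg hr.le]
    have hcast : ((n:ℝ)+1) = ((n+1:ℕ):ℝ) := by push_cast; ring
    rw [hcast, Real.rpow_natCast, div_pow]
    have e : A^n / r^n = A^n * r * (r^(n+1))⁻¹ := by
      field_simp
      ring
    rw [e]
    have h5 : A^n * r ≤ A^n * (2*D) := mul_le_mul_of_nonneg_left hr2D (by positivity)
    exact mul_le_mul_of_nonneg_right h5 (by positivity)
  calc coverN F r ≤ 𝒰.card := coverN_le_card F r 𝒰 (by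
        intro U hU
        obtain ⟨kk, _, rfl⟩ := Finset.mem_image.mp hU
        exact hdiamcell kk) hcover
    _ ≤ ENNReal.ofReal (A^n * (2*D) * r^(-((n:ℝ)+1))) := by
        rw [← ENNReal.ofReal_natCast]
        apply ENNReal.ofReal_le_ofReal
        have h8 : (𝒰.card : ℝ) ≤ ((2*M+2:ℕ):ℝ)^n := by
          have h9 : 𝒰.card ≤ (2*M+2)^n := le_of_le_of_eq Finset.card_image_le hKcard
          exact_mod_cast h9
        exact h8.trans (h3.trans h4)

lemma dimAreg_le_of_box {n : ℕ} {F : Set (EuclideanSpace ℝ (Fin n))}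
    (hF : Bornology.IsBounded F) {θ γ C : ℝ} (hθ : θ ∈ Ioo (0:ℝ) 1)
    (hγ : 0 < γ) (hC : 0 < C)
    (hbox : ∀ r : ℝ, 0 < r → r ≤ diam F → coverN F r ≤ ENNReal.ofReal (C * r ^ (-γ))) :
    dimAreg θ F ≤ γ / (1 - θ) := by
  obtain ⟨hθ0, hθ1⟩ := hθ
  have h1θ : 0 < 1 - θ := by linarith
  set α : ℝ := γ / (1 - θ) with hα
  have hα0 : 0 < α := div_pos hγ h1θ
  apply csInf_le ⟨0, fun β hβ => hβ.1.le⟩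
  refine ⟨hα0, max C 1, lt_of_lt_of_le one_pos (le_max_right _ _), ?_⟩
  intro x hx r R hr hrR hRR hR1
  have hR0 : 0 < R := lt_trans (lt_of_lt_of_le hr hrR) hRR
  have hrR' : r < R := lt_of_le_of_lt hrR hRR
  have hRr1 : 1 ≤ R / r := (one_le_div hr).mpr hrR'.le
  have hkey : r ^ (-γ) ≤ (R/r) ^ α := by
    have h1 : r ^ θ ≤ R := by
      calc r ^ θ ≤ (R ^ (1/θ)) ^ θ := Real.rpow_le_rpow hr.le hrR hθ0.le
        _ = R ^ ((1/θ) * θ) := (Real.rpow_mul hR0.le _ _).symm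
        _ = R := by rw [one_div, inv_mul_cancel₀ hθ0.ne', Real.rpow_one]
    have h2 : r ^ (θ - 1) ≤ R / r := by
      have e : r ^ (θ - 1) = r ^ θ / r := by
        rw [Real.rpow_sub hr, Real.rpow_one]
      rw [e]
      gcongr
    calc r ^ (-γ) = (r ^ (θ - 1)) ^ α := by
          rw [← Real.rpow_mul hr.le]
          congr 1
          rw [hα]
          field_simp
          ring
      _ ≤ (R/r) ^ α := Real.rpow_le_rpow (Real.rpow_nonneg hr.le _) h2 hα0.le
  have hmul : C * r ^ (-γ) ≤ max C 1 * (R/r) ^ α :=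
    mul_le_mul (le_max_left _ _) hkey (Real.rpow_nonneg hr.le _) (by positivity)
  by_cases hrd : r ≤ diam F
  · calc coverN (closedBall x R ∩ F) r ≤ coverN F r := coverN_mono inter_subset_right r
      _ ≤ ENNReal.ofReal (C * r ^ (-γ)) := hbox r hr hrd
      _ ≤ ENNReal.ofReal (max C 1 * (R/r) ^ α) := ENNReal.ofReal_le_ofReal hmul
  · push_neg at hrd
    have hd1 : EMetric.diam (closedBall x R ∩ F) ≤ ENNReal.ofReal r := by
      calc EMetric.diam (closedBall x R ∩ F) ≤ EMetric.diam F :=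
            EMetric.diam_mono inter_subset_right
        _ = ENNReal.ofReal (diam F) := by
            rw [Metric.diam, ENNReal.ofReal_toReal hF.ediam_ne_top]; rfl
        _ ≤ ENNReal.ofReal r := ENNReal.ofReal_le_ofReal hrd.le
    calc coverN (closedBall x R ∩ F) r ≤ 1 := coverN_le_one hd1
      _ ≤ ENNReal.ofReal (max C 1 * (R/r) ^ α) := by
          rw [ENNReal.one_le_ofReal]
          have hRr : 1 ≤ (R/r) ^ α := Real.one_le_rpow hRr1 hα0.le
          calc (1:ℝ) = 1 * 1 := by ring
            _ ≤ max C 1 * (R/r) ^ α :=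
                mul_le_mul (le_max_right _ _) hRr one_pos.le (by positivity)

end Stmt12Aux

/-- lower bound for the phase-transition parameter. -/
theorem stmt12 {n : ℕ} (F : Set (EuclideanSpace ℝ (Fin n)))
    (hne : F.Nonempty) (hF : Bornology.IsBounded F) (hqA : 0 < dimqA F) :
    1 - dimBupper F / dimqA F ≤ rhoPT F := by
  classical
  obtain ⟨γ₀, C₀, hγ₀, hC₀, hb₀⟩ := Stmt12Aux.exists_box_bound F hF
  set S : Set ℝ := {α : ℝ | 0 < α ∧ ∃ C : ℝ, 0 < C ∧ ∀ r : ℝ, 0 < r → r ≤ diam F →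
    coverN F r ≤ ENNReal.ofReal (C * r ^ (-α))} with hS
  have hSne : S.Nonempty := ⟨γ₀, hγ₀, C₀, hC₀, hb₀⟩
  have hBdef : dimBupper F = sInf S := rfl
  have hB0 : 0 ≤ dimBupper F := by
    rw [hBdef]
    exact Real.sInf_nonneg (fun β hβ => hβ.1.le)
  have key : ∀ θ ∈ {θ : ℝ | θ ∈ Ioo (0:ℝ) 1 ∧ dimAreg θ F = dimqA F},
      1 - dimBupper F / dimqA F ≤ θ := by
    rintro θ ⟨hθI, hθeq⟩
    by_contra hcon
    push_neg at hcon
    have h1 : dimBupper F < (1 - θ) * dimqA F := by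
      have h2 : dimBupper F / dimqA F < 1 - θ := by linarith
      calc dimBupper F = (dimBupper F / dimqA F) * dimqA F := by field_simp
        _ < (1 - θ) * dimqA F := mul_lt_mul_of_pos_right h2 hqA
    rw [hBdef] at h1
    obtain ⟨γ, hγS, hγlt⟩ := exists_lt_of_csInf_lt hSne h1
    obtain ⟨hγ0, C, hC0, hb⟩ := hγS
    have h3 : dimAreg θ F ≤ γ / (1 - θ) :=
      Stmt12Aux.dimAreg_le_of_box hF hθI hγ0 hC0 hb
    have h4 : γ / (1 - θ) < dimqA F := by
      rw [div_lt_iff₀ (by linarith [hθI.2] : (0:ℝ) < 1 - θ)]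
      linarith [hγlt]
    rw [hθeq] at h3
    linarith
  unfold rhoPT
  split_ifs with hex
  · obtain ⟨θ₀, hθ₀I, hθ₀eq⟩ := hex
    exact le_csInf ⟨θ₀, hθ₀I, hθ₀eq⟩ key
  · have h5 : 0 ≤ dimBupper F / dimqA F := div_nonneg hB0 hqA.le
    linarith
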